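/- With φ_{X,T} as above and z₁ ≠ z₂ positive reals, |(1/A) ∫_A^{2A} φ_{X,T}(z₁) · conj(φ_{X,T}(z₂)) dX| ≤ C z₁ z₂ A^{1/2} / |z₁ − z₂| for an absolute constant C. -/

import Mathlib

open MeasureTheory Complex
set_option maxHeartbeats 1000000

noncomputable section Stmt7Aux

def uu (X : ℝ) : ℝ := Real.log X / 2
def rr (σ s X : ℝ) : ℝ := Real.exp (-(σ * s * Real.sinh (uu X)))
def b1 (T X : ℝ) : ℂ := ((Real.log X : ℂ) + Complex.I/T)/2
def b2 (T X : ℝ) : ℂ := ((Real.log X : ℂ) - Complex.I/T)/2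
def SS (T X : ℝ) : ℂ := Complex.sinh (b1 T X) * Complex.sinh (b2 T X)
def SS' (T X : ℝ) : ℂ := Complex.cosh (b1 T X) * ((1/(2*X):ℝ):ℂ) * Complex.sinh (b2 T X)
  + Complex.sinh (b1 T X) * (Complex.cosh (b2 T X) * ((1/(2*X):ℝ):ℂ))
def rho (σ s X : ℝ) : ℝ := X * rr σ s X / Real.sinh (uu X)
def rho' (σ s X : ℝ) : ℝ :=
  ((1 * rr σ s X + X * (rr σ s X * (-(σ * s * (Real.cosh (uu X) * (1/(2*X))))))) * Real.sinh (uu X)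
    - X * rr σ s X * (Real.cosh (uu X) * (1/(2*X)))) / (Real.sinh (uu X))^2
def EE (μ X : ℝ) : ℂ := Complex.exp (Complex.I * μ * (Real.cosh (uu X) : ℂ))
def EE' (μ X : ℝ) : ℂ := EE μ X * (Complex.I * μ * ((Real.sinh (uu X) * (1/(2*X)) : ℝ) : ℂ))
def psi (T σ s : ℝ) (c₀ : ℂ) (X : ℝ) : ℂ := c₀ * ((rho σ s X : ℝ) : ℂ) * SS T X
def psi' (T σ s : ℝ) (c₀ : ℂ) (X : ℝ) : ℂ := c₀ * ((rho' σ s X : ℝ) : ℂ) * SS T X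
  + c₀ * ((rho σ s X : ℝ) : ℂ) * SS' T X

/-! ### Derivatives -/

theorem hasDerivAt_uu {X : ℝ} (hX : 0 < X) : HasDerivAt uu (1/(2*X)) X := by
  have := (Real.hasDerivAt_log (ne_of_gt hX)).div_const 2
  exact this.congr_deriv (by ring)

theorem hasDerivAt_sinh_uu {X : ℝ} (hX : 0 < X) :
    HasDerivAt (fun X => Real.sinh (uu X)) (Real.cosh (uu X) * (1/(2*X))) X :=
  (Real.hasDerivAt_sinh (uu X)).comp X (hasDerivAt_uu hX)

theorem hasDerivAt_cosh_uu {X : ℝ} (hX : 0 < X) :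
    HasDerivAt (fun X => Real.cosh (uu X)) (Real.sinh (uu X) * (1/(2*X))) X :=
  (Real.hasDerivAt_cosh (uu X)).comp X (hasDerivAt_uu hX)

theorem hasDerivAt_rr (σ s : ℝ) {X : ℝ} (hX : 0 < X) :
    HasDerivAt (rr σ s) (rr σ s X * (-(σ * s * (Real.cosh (uu X) * (1/(2*X)))))) X := by
  have h1 : HasDerivAt (fun X => -(σ * s * Real.sinh (uu X)))
      (-(σ * s * (Real.cosh (uu X) * (1/(2*X))))) X :=
    (((hasDerivAt_sinh_uu hX).const_mul (σ * s))).neg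
  exact h1.exp

theorem hasDerivAt_rho (σ s : ℝ) {X : ℝ} (hX : 0 < X) (hs : Real.sinh (uu X) ≠ 0) :
    HasDerivAt (rho σ s) (rho' σ s X) X := by
  exact ((hasDerivAt_id X).mul (hasDerivAt_rr σ s hX)).div (hasDerivAt_sinh_uu hX) hs

theorem hasDerivAt_b1 (T : ℝ) {X : ℝ} (hX : 0 < X) :
    HasDerivAt (b1 T) (((1/(2*X):ℝ)):ℂ) X := by
  have := (((Real.hasDerivAt_log (ne_of_gt hX)).ofReal_comp).add_const (Complex.I/T)).div_const 2
  exact this.congr_deriv (by push_cast; ring)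

theorem hasDerivAt_b2 (T : ℝ) {X : ℝ} (hX : 0 < X) :
    HasDerivAt (b2 T) (((1/(2*X):ℝ)):ℂ) X := by
  have := (((Real.hasDerivAt_log (ne_of_gt hX)).ofReal_comp).sub_const (Complex.I/T)).div_const 2
  exact this.congr_deriv (by push_cast; ring)

theorem hasDerivAt_SS (T : ℝ) {X : ℝ} (hX : 0 < X) : HasDerivAt (SS T) (SS' T X) X := by
  have h1 : HasDerivAt (fun X => Complex.sinh (b1 T X))
      (Complex.cosh (b1 T X) * ((1/(2*X):ℝ):ℂ)) X := by
    have := HasDerivAt.scomp (𝕜 := ℝ) (𝕜' := ℂ) X (Complex.hasDerivAt_sinh (b1 T X))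
      (hasDerivAt_b1 T hX)
    simpa [Function.comp_def, smul_eq_mul, mul_comm] using this
  have h2 : HasDerivAt (fun X => Complex.sinh (b2 T X))
      (Complex.cosh (b2 T X) * ((1/(2*X):ℝ):ℂ)) X := by
    have := HasDerivAt.scomp (𝕜 := ℝ) (𝕜' := ℂ) X (Complex.hasDerivAt_sinh (b2 T X))
      (hasDerivAt_b2 T hX)
    simpa [Function.comp_def, smul_eq_mul, mul_comm] using this
  exact h1.mul h2

theorem hasDerivAt_EE (μ : ℝ) {X : ℝ} (hX : 0 < X) : HasDerivAt (EE μ) (EE' μ X) X := by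
  have h1 : HasDerivAt (fun X => Complex.I * μ * (Real.cosh (uu X) : ℂ))
      (Complex.I * μ * ((Real.sinh (uu X) * (1/(2*X)) : ℝ) : ℂ)) X :=
    ((hasDerivAt_cosh_uu hX).ofReal_comp).const_mul (Complex.I * μ)
  exact h1.cexp

theorem hasDerivAt_psi (T σ s : ℝ) (c₀ : ℂ) {X : ℝ} (hX : 0 < X)
    (hs : Real.sinh (uu X) ≠ 0) :
    HasDerivAt (psi T σ s c₀) (psi' T σ s c₀ X) X := by
  have h1 : HasDerivAt (fun X => c₀ * ((rho σ s X : ℝ) : ℂ))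
      (c₀ * ((rho' σ s X : ℝ) : ℂ)) X :=
    ((hasDerivAt_rho σ s hX hs).ofReal_comp).const_mul c₀
  exact h1.mul (hasDerivAt_SS T hX)

/-! ### Trigonometric expansions -/

theorem b1_eq {T X : ℝ} (hT : 0 < T) :
    b1 T X = ((uu X : ℝ) : ℂ) + ((1/(2*T) : ℝ) : ℂ) * Complex.I := by
  simp only [b1, uu]
  have : (T:ℂ) ≠ 0 := by exact_mod_cast hT.ne'
  push_cast
  field_simp

theorem b2_eq {T X : ℝ} (hT : 0 < T) :
    b2 T X = ((uu X : ℝ) : ℂ) - ((1/(2*T) : ℝ) : ℂ) * Complex.I := by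
  simp only [b2, uu]
  have : (T:ℂ) ≠ 0 := by exact_mod_cast hT.ne'
  push_cast
  field_simp

theorem coshb1 {T X : ℝ} (hT : 0 < T) :
    Complex.cosh (b1 T X) = (Real.cosh (uu X) : ℂ) * (Real.cos (1/(2*T)) : ℂ)
      + (Real.sinh (uu X) : ℂ) * (Real.sin (1/(2*T)) : ℂ) * Complex.I := by
  rw [b1_eq hT, Complex.cosh_add, Complex.cosh_mul_I, Complex.sinh_mul_I,
    ← Complex.ofReal_cosh, ← Complex.ofReal_sinh, ← Complex.ofReal_cos, ← Complex.ofReal_sin]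
  ring

theorem coshb2 {T X : ℝ} (hT : 0 < T) :
    Complex.cosh (b2 T X) = (Real.cosh (uu X) : ℂ) * (Real.cos (1/(2*T)) : ℂ)
      - (Real.sinh (uu X) : ℂ) * (Real.sin (1/(2*T)) : ℂ) * Complex.I := by
  rw [b2_eq hT, Complex.cosh_sub, Complex.cosh_mul_I, Complex.sinh_mul_I,
    ← Complex.ofReal_cosh, ← Complex.ofReal_sinh, ← Complex.ofReal_cos, ← Complex.ofReal_sin]
  ring

theorem sinhb1 {T X : ℝ} (hT : 0 < T) :
    Complex.sinh (b1 T X) = (Real.sinh (uu X) : ℂ) * (Real.cos (1/(2*T)) : ℂ)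
      + (Real.cosh (uu X) : ℂ) * (Real.sin (1/(2*T)) : ℂ) * Complex.I := by
  rw [b1_eq hT, Complex.sinh_add, Complex.cosh_mul_I, Complex.sinh_mul_I,
    ← Complex.ofReal_cosh, ← Complex.ofReal_sinh, ← Complex.ofReal_cos, ← Complex.ofReal_sin]
  ring

theorem sinhb2 {T X : ℝ} (hT : 0 < T) :
    Complex.sinh (b2 T X) = (Real.sinh (uu X) : ℂ) * (Real.cos (1/(2*T)) : ℂ)
      + (Real.cosh (uu X) : ℂ) * (-Real.sin (1/(2*T)) : ℝ) * Complex.I := by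
  rw [b2_eq hT, Complex.sinh_sub, Complex.cosh_mul_I, Complex.sinh_mul_I,
    ← Complex.ofReal_cosh, ← Complex.ofReal_sinh, ← Complex.ofReal_cos, ← Complex.ofReal_sin]
  push_cast
  ring

/-! ### Norm helper -/

theorem abs_sinh_le_cosh (x : ℝ) : |Real.sinh x| ≤ Real.cosh x := by
  have h1 := Real.cosh_add_sinh x
  have h2 := Real.cosh_sub_sinh x
  have h3 := Real.exp_pos x
  have h4 := Real.exp_pos (-x)
  rw [abs_le]
  constructor <;> nlinarith

theorem norm_comb_le {a b c d M : ℝ} (ha : |a| ≤ M) (hb : |b| ≤ 1) (hc : |c| ≤ M)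
    (hd : |d| ≤ 1) :
    ‖(a:ℂ) * (b:ℂ) + (c:ℂ) * (d:ℂ) * Complex.I‖ ≤ 2 * M := by
  have h1 := norm_add_le ((a:ℂ) * (b:ℂ)) ((c:ℂ) * (d:ℂ) * Complex.I)
  have e1 : ‖(a:ℂ) * (b:ℂ)‖ = |a| * |b| := by
    rw [norm_mul, Complex.norm_real, Complex.norm_real]; rfl
  have e2 : ‖(c:ℂ) * (d:ℂ) * Complex.I‖ = |c| * |d| := by
    rw [norm_mul, norm_mul, Complex.norm_real, Complex.norm_real, Complex.norm_I]
    simp [Real.norm_eq_abs]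
  have hM : 0 ≤ M := le_trans (abs_nonneg a) ha
  have hb' : 0 ≤ |b| := abs_nonneg b
  have hd' : 0 ≤ |d| := abs_nonneg d
  have ha' : 0 ≤ |a| := abs_nonneg a
  have hc' : 0 ≤ |c| := abs_nonneg c
  nlinarith [h1, e1, e2]

theorem norm_EE (μ X : ℝ) : ‖EE μ X‖ = 1 := by
  rw [EE, Complex.norm_exp]
  have : (Complex.I * μ * (Real.cosh (uu X) : ℂ)).re = 0 := by
    simp [Complex.mul_re, Complex.mul_im]
  rw [this, Real.exp_zero]


theorem conjb {T X : ℝ} : (starRingEnd ℂ) (b1 T X) = b2 T X := by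
  simp [b1, b2, map_div₀, Complex.conj_ofReal, Complex.conj_I, sub_eq_add_neg, neg_div,
    Complex.conj_ofNat]

theorem identity (T z₁ z₂ X σ s μ : ℝ) (c₀ : ℂ) (hT : 0 < T) (hX : 1 < X)
    (hσ : σ = z₁ + z₂) (hs : s = Real.sin (1/(2*T)))
    (hμdef : μ = (z₁ - z₂) * Real.cos (1/(2*T)))
    (hc₀ : c₀ = 2*z₁*z₂/(Complex.I*(μ:ℂ)*(Real.pi:ℂ)^2))
    (hμ : μ ≠ 0) :
    ((-(Complex.sinh ((Real.log X + Complex.I/T)/2))/(Real.pi : ℂ)) * (z₁ : ℂ) *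
        Complex.exp (Complex.I * (z₁:ℂ) * Complex.cosh ((Real.log X + Complex.I/T)/2))) *
      (starRingEnd ℂ) ((-(Complex.sinh ((Real.log X + Complex.I/T)/2))/(Real.pi : ℂ)) * (z₂:ℂ) *
        Complex.exp (Complex.I * (z₂:ℂ) * Complex.cosh ((Real.log X + Complex.I/T)/2)))
    = psi T σ s c₀ X * EE' μ X := by
  have hXpos : (0:ℝ) < X := lt_trans one_pos hX
  have huu : 0 < uu X := by
    have := Real.log_pos hX
    rw [uu]; linarith
  have hsinh : Real.sinh (uu X) ≠ 0 := ne_of_gt (Real.sinh_pos_iff.mpr huu)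
  have hb1 : ((Real.log X : ℂ) + Complex.I/T)/2 = b1 T X := rfl
  rw [hb1]
  have hc : (starRingEnd ℂ) ((-(Complex.sinh (b1 T X))/(Real.pi : ℂ)) * (z₂:ℂ) *
      Complex.exp (Complex.I * (z₂:ℂ) * Complex.cosh (b1 T X)))
      = (-(Complex.sinh (b2 T X))/(Real.pi : ℂ)) * (z₂:ℂ) *
        Complex.exp (-(Complex.I * (z₂:ℂ) * Complex.cosh (b2 T X))) := by
    simp only [map_mul, map_div₀, map_neg, ← Complex.sinh_conj, ← Complex.cosh_conj,
      ← Complex.exp_conj, conjb, Complex.conj_ofReal, Complex.conj_I]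
    ring
  rw [hc]
  have hexp : Complex.exp (Complex.I * (z₁:ℂ) * Complex.cosh (b1 T X)) *
      Complex.exp (-(Complex.I * (z₂:ℂ) * Complex.cosh (b2 T X)))
      = EE μ X * ((rr σ s X : ℝ) : ℂ) := by
    rw [← Complex.exp_add, EE, rr, Complex.ofReal_exp, ← Complex.exp_add]
    congr 1
    rw [coshb1 hT, coshb2 hT, hμdef, hσ, hs]
    push_cast
    linear_combination ((z₁:ℂ)+z₂) * Complex.sinh ((uu X : ℝ):ℂ) *
      Complex.sin (1/(2*(T:ℂ))) * Complex.I_sq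
  calc (-(Complex.sinh (b1 T X))/(Real.pi : ℂ)) * (z₁:ℂ) *
        Complex.exp (Complex.I * (z₁:ℂ) * Complex.cosh (b1 T X)) *
      ((-(Complex.sinh (b2 T X))/(Real.pi : ℂ)) * (z₂:ℂ) *
        Complex.exp (-(Complex.I * (z₂:ℂ) * Complex.cosh (b2 T X))))
      = (Complex.sinh (b1 T X) * Complex.sinh (b2 T X)) * ((z₁:ℂ)*z₂/(Real.pi:ℂ)^2) *
        (Complex.exp (Complex.I * (z₁:ℂ) * Complex.cosh (b1 T X)) *
         Complex.exp (-(Complex.I * (z₂:ℂ) * Complex.cosh (b2 T X)))) := by ring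
    _ = psi T σ s c₀ X * EE' μ X := by
        rw [hexp, psi, EE', SS, rho, hc₀]
        have hπ : (Real.pi : ℂ) ≠ 0 := by exact_mod_cast Real.pi_ne_zero
        have hXc : (X:ℂ) ≠ 0 := by exact_mod_cast hXpos.ne'
        have hsc : ((Real.sinh (uu X) : ℝ):ℂ) ≠ 0 := by exact_mod_cast hsinh
        have hμc : (μ:ℂ) ≠ 0 := by exact_mod_cast hμ
        have hsc' : Complex.sinh ((uu X : ℝ):ℂ) ≠ 0 := by
          rw [← Complex.ofReal_sinh]; exact_mod_cast hsinh
        have hc1 : (↑X:ℂ) * I * ↑μ * Complex.sinh ((uu X:ℝ):ℂ) * (↑Real.pi:ℂ) ^ 2 * (↑X:ℂ)⁻¹ *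
            I⁻¹ * (↑μ:ℂ)⁻¹ * (Complex.sinh ((uu X:ℝ):ℂ))⁻¹ * ((↑Real.pi:ℂ)⁻¹) ^ 2 = 1 := by
          field_simp
        push_cast
        field_simp [hπ, hXc, hsc', hμc, Complex.I_ne_zero]


/-! ### Real facts -/

theorem exp_uu {X : ℝ} (hX : 0 < X) : Real.exp (uu X) = Real.sqrt X := by
  have h : Real.sqrt X = Real.exp (Real.log X * (1/2)) := by
    rw [Real.sqrt_eq_rpow, Real.rpow_def_of_pos hX]
  rw [uu, h]
  ring_nf

theorem cosh_uu_le {X : ℝ} (hX : 1 ≤ X) : Real.cosh (uu X) ≤ Real.sqrt X := by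
  have h0 : (0:ℝ) < X := by linarith
  have he : Real.exp (uu X) = Real.sqrt X := exp_uu h0
  have hen : Real.exp (-uu X) = (Real.sqrt X)⁻¹ := by rw [Real.exp_neg, he]
  have hs : 0 < Real.sqrt X := Real.sqrt_pos.mpr h0
  have hs1 : 1 ≤ Real.sqrt X := by
    nlinarith [Real.sq_sqrt h0.le, Real.sqrt_nonneg X]
  have hinv : (Real.sqrt X)⁻¹ ≤ Real.sqrt X := by
    rw [inv_le_iff_one_le_mul₀ hs]
    nlinarith
  rw [Real.cosh_eq, he, hen]
  linarith

theorem sinh_uu_ge {A X : ℝ} (hA : 2 ≤ A) (hAX : A ≤ X) :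
    Real.sqrt A / 4 ≤ Real.sinh (uu X) := by
  have hA0 : (0:ℝ) < A := by linarith
  have h0 : (0:ℝ) < X := by linarith
  have he : Real.exp (uu X) = Real.sqrt X := exp_uu h0
  have hen : Real.exp (-uu X) = (Real.sqrt X)⁻¹ := by rw [Real.exp_neg, he]
  have hsA : 0 < Real.sqrt A := Real.sqrt_pos.mpr hA0
  have hsX : 0 < Real.sqrt X := Real.sqrt_pos.mpr h0
  have hle : Real.sqrt A ≤ Real.sqrt X := Real.sqrt_le_sqrt hAX
  have hinv : (Real.sqrt X)⁻¹ ≤ (Real.sqrt A)⁻¹ := by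
    exact inv_anti₀ hsA hle
  have hA2 : Real.sqrt A ^ 2 = A := Real.sq_sqrt hA0.le
  have hinv2 : (Real.sqrt A)⁻¹ ≤ Real.sqrt A / 2 := by
    rw [inv_le_iff_one_le_mul₀ hsA]
    nlinarith
  rw [Real.sinh_eq, he, hen]
  linarith

theorem sqrt_two_mul_le {A : ℝ} (hA : 0 ≤ A) : Real.sqrt (2*A) ≤ 2 * Real.sqrt A := by
  have h4 : Real.sqrt 4 = 2 := by
    rw [show (4:ℝ) = 2^2 by norm_num]
    exact Real.sqrt_sq (by norm_num)
  have := Real.sqrt_le_sqrt (show 2*A ≤ 4*A by linarith)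
  calc Real.sqrt (2*A) ≤ Real.sqrt (4*A) := this
    _ = 2 * Real.sqrt A := by rw [Real.sqrt_mul (by norm_num : (0:ℝ) ≤ 4), h4]

theorem norm_comb_le' {a b c d M : ℝ} (ha : |a| ≤ M) (hb : |b| ≤ 1) (hc : |c| ≤ M)
    (hd : |d| ≤ 1) :
    ‖(a:ℂ) * (b:ℂ) - (c:ℂ) * (d:ℂ) * Complex.I‖ ≤ 2 * M := by
  have h : (a:ℂ) * (b:ℂ) - (c:ℂ) * (d:ℂ) * Complex.I
      = (a:ℂ) * (b:ℂ) + (c:ℂ) * ((-d:ℝ):ℂ) * Complex.I := by push_cast; ring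
  rw [h]
  exact norm_comb_le ha hb hc (by rwa [abs_neg])


theorem c0_norm_le (z₁ z₂ μ : ℝ) (hz₁ : 0 < z₁) (hz₂ : 0 < z₂) (hμ : μ ≠ 0) :
    ‖2*(z₁:ℂ)*(z₂:ℂ)/(Complex.I*(μ:ℂ)*(Real.pi:ℂ)^2)‖ ≤ z₁*z₂/|μ| := by
  have hμ0 : 0 < |μ| := abs_pos.mpr hμ
  have e : ‖2*(z₁:ℂ)*(z₂:ℂ)/(Complex.I*(μ:ℂ)*(Real.pi:ℂ)^2)‖
      = 2*z₁*z₂/(|μ| * Real.pi^2) := by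
    simp only [norm_div, norm_mul, norm_pow, Complex.norm_I, Complex.norm_real,
      Real.norm_eq_abs, Complex.norm_ofNat, one_mul]
    rw [abs_of_pos hz₁, abs_of_pos hz₂, abs_of_pos Real.pi_pos]
  have hpi2 : (9:ℝ) ≤ Real.pi^2 := by nlinarith [Real.pi_gt_three]
  rw [e, div_le_div_iff₀ (by positivity) hμ0]
  nlinarith [mul_le_mul_of_nonneg_left hpi2 (mul_pos (mul_pos hz₁ hz₂) hμ0).le,
    mul_pos (mul_pos hz₁ hz₂) hμ0]

theorem psi_bounds (A T z₁ z₂ σ s μ : ℝ) (c₀ : ℂ) (hA : 2 < A) (hT : 2 < T)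
    (hz₁ : 0 < z₁) (hz₂ : 0 < z₂)
    (hσ : σ = z₁ + z₂) (hsdef : s = Real.sin (1/(2*T)))
    (hc₀ : c₀ = 2*z₁*z₂/(Complex.I*(μ:ℂ)*(Real.pi:ℂ)^2)) (hμ : μ ≠ 0)
    {X : ℝ} (hX : X ∈ Set.Icc A (2*A)) :
    ‖psi T σ s c₀ X‖ ≤ 64 * (z₁*z₂/|μ|) * (A * Real.sqrt A) ∧
    ‖psi' T σ s c₀ X‖ ≤ 544 * (z₁*z₂/|μ|) * Real.sqrt A := by
  obtain ⟨hAX, hXle⟩ := hX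
  have hT0 : (0:ℝ) < T := by linarith
  have hA0 : (0:ℝ) < A := by linarith
  have hX1 : (1:ℝ) < X := by linarith
  have hX0 : (0:ℝ) < X := by linarith
  set sa := Real.sqrt A with hsa_def
  have hsa : 0 < sa := Real.sqrt_pos.mpr hA0
  have hsa2 : sa^2 = A := Real.sq_sqrt hA0.le
  set cu := Real.cosh (uu X) with hcu_def
  set sh := Real.sinh (uu X) with hsh_def
  have hcupos : 0 < cu := Real.cosh_pos _
  have hcuX : cu ≤ Real.sqrt X := cosh_uu_le hX1.le
  have hXsq : Real.sqrt X ^ 2 = X := Real.sq_sqrt hX0.le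
  have hcu2X : cu^2 ≤ X := by nlinarith [Real.sqrt_nonneg X]
  have hcu2A : cu^2 ≤ 2*A := by linarith
  have hcu2sa : cu ≤ 2*sa := by
    calc cu ≤ Real.sqrt X := hcuX
      _ ≤ Real.sqrt (2*A) := Real.sqrt_le_sqrt (by linarith)
      _ ≤ 2*sa := sqrt_two_mul_le hA0.le
  have hsl : sa/4 ≤ sh := sinh_uu_ge (by linarith) hAX
  have hsp : 0 < sh := by nlinarith
  have hshc : sh ≤ cu := le_trans (le_abs_self _) (abs_sinh_le_cosh _)
  have hs0 : 0 ≤ s := by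
    rw [hsdef]
    apply Real.sin_nonneg_of_nonneg_of_le_pi
    · positivity
    · have h14 : 1/(2*T) ≤ 1/4 := by
        rw [div_le_div_iff₀ (by linarith) (by norm_num)]
        linarith
      nlinarith [Real.pi_gt_three]
  have hσ0 : 0 < σ := by rw [hσ]; linarith
  have hr0 : 0 < rr σ s X := Real.exp_pos _
  have hr1 : rr σ s X ≤ 1 := by
    rw [rr]
    have : -(σ * s * sh) ≤ 0 := by
      have : 0 ≤ σ * s * sh := by positivity
      linarith
    calc Real.exp (-(σ * s * Real.sinh (uu X))) ≤ Real.exp 0 := Real.exp_le_exp.mpr this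
      _ = 1 := Real.exp_zero
  have hkey : σ * s * sh * rr σ s X ≤ 1 := by
    rw [rr, Real.exp_neg, ← hsh_def, ← div_eq_mul_inv, div_le_one (Real.exp_pos _)]
    linarith [Real.add_one_le_exp (σ * s * sh)]
  -- rho bounds
  have hrho0 : 0 ≤ rho σ s X := by
    rw [rho]; positivity
  have hrho : rho σ s X ≤ 8 * sa := by
    rw [rho, ← hsh_def, div_le_iff₀ hsp]
    nlinarith
  -- SS bounds
  have hnb1 : ‖Complex.sinh (b1 T X)‖ ≤ 2 * cu := by
    rw [sinhb1 hT0]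
    exact norm_comb_le (abs_sinh_le_cosh _) (Real.abs_cos_le_one _)
      (le_of_eq (abs_of_pos hcupos)) (Real.abs_sin_le_one _)
  have hnb2 : ‖Complex.sinh (b2 T X)‖ ≤ 2 * cu := by
    rw [sinhb2 hT0]
    exact norm_comb_le (abs_sinh_le_cosh _) (Real.abs_cos_le_one _)
      (le_of_eq (abs_of_pos hcupos)) (by rw [abs_neg]; exact Real.abs_sin_le_one _)
  have hncb1 : ‖Complex.cosh (b1 T X)‖ ≤ 2 * cu := by
    rw [coshb1 hT0]
    exact norm_comb_le (le_of_eq (abs_of_pos hcupos)) (Real.abs_cos_le_one _)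
      (abs_sinh_le_cosh _) (Real.abs_sin_le_one _)
  have hncb2 : ‖Complex.cosh (b2 T X)‖ ≤ 2 * cu := by
    rw [coshb2 hT0]
    exact norm_comb_le' (le_of_eq (abs_of_pos hcupos)) (Real.abs_cos_le_one _)
      (abs_sinh_le_cosh _) (Real.abs_sin_le_one _)
  have hSS : ‖SS T X‖ ≤ 8 * A := by
    rw [SS, norm_mul]
    calc ‖Complex.sinh (b1 T X)‖ * ‖Complex.sinh (b2 T X)‖ ≤ (2*cu) * (2*cu) := by
          exact mul_le_mul hnb1 hnb2 (norm_nonneg _) (by positivity)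
      _ = 4 * cu^2 := by ring
      _ ≤ 8 * A := by linarith
  have hhalf : ‖((1/(2*X):ℝ):ℂ)‖ = 1/(2*X) := by
    rw [Complex.norm_real, Real.norm_eq_abs, abs_of_pos (by positivity)]
  have hSS' : ‖SS' T X‖ ≤ 4 := by
    rw [SS']
    have t1 : ‖Complex.cosh (b1 T X) * ((1/(2*X):ℝ):ℂ) * Complex.sinh (b2 T X)‖ ≤ 2 := by
      rw [norm_mul, norm_mul, hhalf]
      calc ‖Complex.cosh (b1 T X)‖ * (1/(2*X)) * ‖Complex.sinh (b2 T X)‖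
          ≤ (2*cu) * (1/(2*X)) * (2*cu) := by
            apply mul_le_mul (mul_le_mul hncb1 le_rfl (by positivity) (by positivity)) hnb2
              (norm_nonneg _) (by positivity)
        _ = 2 * cu^2 / X := by ring
        _ ≤ 2 := by rw [div_le_iff₀ hX0]; nlinarith
    have t2 : ‖Complex.sinh (b1 T X) * (Complex.cosh (b2 T X) * ((1/(2*X):ℝ):ℂ))‖ ≤ 2 := by
      rw [norm_mul, norm_mul, hhalf]
      calc ‖Complex.sinh (b1 T X)‖ * (‖Complex.cosh (b2 T X)‖ * (1/(2*X)))
          ≤ (2*cu) * ((2*cu) * (1/(2*X))) := by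
            apply mul_le_mul hnb1 (mul_le_mul hncb2 le_rfl (by positivity) (by positivity))
              (by positivity) (by positivity)
        _ = 2 * cu^2 / X := by ring
        _ ≤ 2 := by rw [div_le_iff₀ hX0]; nlinarith
    calc ‖_ + _‖ ≤ _ := norm_add_le _ _
      _ ≤ (2:ℝ) + 2 := add_le_add t1 t2
      _ = 4 := by norm_num
  -- rho' bound
  have hrho' : |rho' σ s X| ≤ 64 / sa := by
    have hnum : rho' σ s X = (rr σ s X * sh - σ*s*rr σ s X*sh*cu/2 - rr σ s X * cu/2) / sh^2 := by
      rw [rho', ← hsh_def, ← hcu_def]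
      field_simp
      ring
    rw [hnum, abs_div, abs_of_pos (by positivity : (0:ℝ) < sh^2)]
    have habs : |rr σ s X * sh - σ*s*rr σ s X*sh*cu/2 - rr σ s X * cu/2| ≤ 2*cu := by
      rw [abs_le]
      constructor
      · have h1 : σ*s*rr σ s X*sh*cu/2 ≤ cu/2 := by nlinarith
        have h2 : rr σ s X * cu/2 ≤ cu/2 := by nlinarith
        nlinarith
      · have h1 : 0 ≤ σ*s*rr σ s X*sh*cu/2 := by positivity
        have h2 : rr σ s X * sh ≤ cu := by nlinarith
        nlinarith
    rw [div_le_div_iff₀ (by positivity) hsa]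
    calc |rr σ s X * sh - σ*s*rr σ s X*sh*cu/2 - rr σ s X * cu/2| * sa ≤ (2*cu) * sa := by
          apply mul_le_mul_of_nonneg_right habs hsa.le
      _ ≤ 64 * sh^2 := by nlinarith
  -- c₀ bound
  have hμ0 : 0 < |μ| := abs_pos.mpr hμ
  have hc₀n : ‖c₀‖ ≤ z₁*z₂/|μ| := by
    rw [hc₀]; exact c0_norm_le z₁ z₂ μ hz₁ hz₂ hμ
  have hc₀0 : 0 ≤ ‖c₀‖ := norm_nonneg _
  have hK0 : 0 ≤ z₁*z₂/|μ| := by positivity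
  -- assemble
  constructor
  · rw [psi, norm_mul, norm_mul, Complex.norm_real, Real.norm_eq_abs, _root_.abs_of_nonneg hrho0]
    calc ‖c₀‖ * rho σ s X * ‖SS T X‖ ≤ (z₁*z₂/|μ|) * (8*sa) * (8*A) := by
          apply mul_le_mul (mul_le_mul hc₀n hrho hrho0 hK0) hSS (norm_nonneg _) (by positivity)
      _ = 64 * (z₁*z₂/|μ|) * (A * sa) := by ring
  · rw [psi']
    have u1 : ‖c₀ * ((rho' σ s X : ℝ):ℂ) * SS T X‖ ≤ (z₁*z₂/|μ|) * (64/sa) * (8*A) := by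
      rw [norm_mul, norm_mul, Complex.norm_real, Real.norm_eq_abs]
      apply mul_le_mul (mul_le_mul hc₀n hrho' (abs_nonneg _) hK0) hSS (norm_nonneg _)
        (by positivity)
    have u2 : ‖c₀ * ((rho σ s X : ℝ):ℂ) * SS' T X‖ ≤ (z₁*z₂/|μ|) * (8*sa) * 4 := by
      rw [norm_mul, norm_mul, Complex.norm_real, Real.norm_eq_abs, _root_.abs_of_nonneg hrho0]
      apply mul_le_mul (mul_le_mul hc₀n hrho hrho0 hK0) hSS' (norm_nonneg _) (by positivity)
    calc ‖_ + _‖ ≤ _ := norm_add_le _ _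
      _ ≤ (z₁*z₂/|μ|) * (64/sa) * (8*A) + (z₁*z₂/|μ|) * (8*sa) * 4 := add_le_add u1 u2
      _ = (z₁*z₂/|μ|) * (512 * (A/sa) + 32*sa) := by ring
      _ = 544 * (z₁*z₂/|μ|) * sa := by
          have hAsa : A / sa = sa := by rw [← hsa2]; field_simp
          rw [hAsa]; ring


theorem contOn_psi' (T σ s : ℝ) (c₀ : ℂ) {A : ℝ} (hA : 2 < A) :
    ContinuousOn (psi' T σ s c₀) (Set.uIcc A (2*A)) := by
  intro x hx
  have hx1 : 1 < x := by
    rw [Set.uIcc_of_le (by linarith)] at hx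
    linarith [hx.1]
  have hx0 : (0:ℝ) < x := by linarith
  have hsp : Real.sinh (uu x) ≠ 0 := by
    have : 0 < uu x := by rw [uu]; have := Real.log_pos hx1; linarith
    exact ne_of_gt (Real.sinh_pos_iff.mpr this)
  apply ContinuousAt.continuousWithinAt
  unfold psi' rho' rho rr SS SS' b1 b2 uu
  fun_prop (disch := first | exact hx0.ne' | exact hsp | positivity)

theorem contOn_EE' (μ : ℝ) {A : ℝ} (hA : 2 < A) :
    ContinuousOn (EE' μ) (Set.uIcc A (2*A)) := by
  intro x hx
  have hx1 : 1 < x := by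
    rw [Set.uIcc_of_le (by linarith)] at hx
    linarith [hx.1]
  have hx0 : (0:ℝ) < x := by linarith
  apply ContinuousAt.continuousWithinAt
  unfold EE' EE uu
  fun_prop (disch := first | exact hx0.ne' | positivity)

end Stmt7Aux

theorem stmt_7 :
    ∃ C > 0, ∀ A T : ℝ, 2 < A → 2 < T →
      ∀ phi : ℝ → ℝ → ℂ,
      (∀ X z, phi X z =
        (-(Complex.sinh ((Real.log X + Complex.I/T)/2))/(Real.pi : ℂ)) * (z : ℂ) *
          Complex.exp (Complex.I * (z : ℂ) * Complex.cosh ((Real.log X + Complex.I/T)/2))) →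
      ∀ z₁ z₂ : ℝ, 0 < z₁ → 0 < z₂ → z₁ ≠ z₂ →
        ‖(1/(A:ℂ)) * ∫ X in A..(2*A), phi X z₁ * (starRingEnd ℂ) (phi X z₂)‖
          ≤ C * z₁ * z₂ * Real.sqrt A / |z₁ - z₂| := by
  refine ⟨2000, by norm_num, ?_⟩
  intro A T hA hT phi hphi z₁ z₂ hz₁ hz₂ hne
  have hT0 : (0:ℝ) < T := by linarith
  have hA0 : (0:ℝ) < A := by linarith
  set s := Real.sin (1/(2*T)) with hsdef
  set μ := (z₁ - z₂) * Real.cos (1/(2*T)) with hμdef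
  set σ := z₁ + z₂ with hσdef
  set c₀ := 2*(z₁:ℂ)*(z₂:ℂ)/(Complex.I*(μ:ℂ)*(Real.pi:ℂ)^2) with hc₀def
  have hcos : 1/2 ≤ Real.cos (1/(2*T)) := by
    have h14 : (0:ℝ) < 1/(2*T) := by positivity
    have h14' : 1/(2*T) ≤ 1/4 := by
      rw [div_le_div_iff₀ (by linarith) (by norm_num)]; linarith
    nlinarith [Real.one_sub_sq_div_two_le_cos (x := 1/(2*T))]
  have hzne : z₁ - z₂ ≠ 0 := sub_ne_zero.mpr hne
  have habs : 0 < |z₁ - z₂| := abs_pos.mpr hzne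
  have hμabs : |z₁ - z₂| / 2 ≤ |μ| := by
    rw [hμdef, abs_mul, abs_of_pos (by linarith : (0:ℝ) < Real.cos (1/(2*T)))]
    nlinarith
  have hμ0 : 0 < |μ| := lt_of_lt_of_le (by positivity) hμabs
  have hμ : μ ≠ 0 := abs_pos.mp hμ0
  -- rewrite the integrand
  have hle : A ≤ 2*A := by linarith
  have huIcc : Set.uIcc A (2*A) = Set.Icc A (2*A) := Set.uIcc_of_le hle
  have heq : Set.EqOn (fun X => phi X z₁ * (starRingEnd ℂ) (phi X z₂))
      (fun X => psi T σ s c₀ X * EE' μ X) (Set.uIcc A (2*A)) := by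
    intro X hX
    rw [huIcc] at hX
    have hX1 : 1 < X := by have := hX.1; linarith
    simp only
    rw [hphi X z₁, hphi X z₂]
    exact identity T z₁ z₂ X σ s μ c₀ hT0 hX1 hσdef hsdef hμdef hc₀def hμ
  rw [intervalIntegral.integral_congr heq]
  -- integration by parts
  have hderiv_psi : ∀ x ∈ Set.uIcc A (2*A), HasDerivAt (psi T σ s c₀) (psi' T σ s c₀ x) x := by
    intro x hx
    rw [huIcc] at hx
    have hx1 : 1 < x := by have := hx.1; linarith
    have hx0 : (0:ℝ) < x := by linarith
    have hsp : Real.sinh (uu x) ≠ 0 := by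
      have : 0 < uu x := by rw [uu]; have := Real.log_pos hx1; linarith
      exact ne_of_gt (Real.sinh_pos_iff.mpr this)
    exact hasDerivAt_psi T σ s c₀ hx0 hsp
  have hderiv_EE : ∀ x ∈ Set.uIcc A (2*A), HasDerivAt (EE μ) (EE' μ x) x := by
    intro x hx
    rw [huIcc] at hx
    have hx0 : (0:ℝ) < x := by have := hx.1; linarith
    exact hasDerivAt_EE μ hx0
  have hint1 : IntervalIntegrable (psi' T σ s c₀) volume A (2*A) :=
    (contOn_psi' T σ s c₀ hA).intervalIntegrable
  have hint2 : IntervalIntegrable (EE' μ) volume A (2*A) :=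
    (contOn_EE' μ hA).intervalIntegrable
  rw [intervalIntegral.integral_mul_deriv_eq_deriv_mul hderiv_psi hderiv_EE hint1 hint2]
  -- bounds
  have hb2A := (psi_bounds A T z₁ z₂ σ s μ c₀ hA hT hz₁ hz₂ hσdef hsdef hc₀def hμ
    (X := 2*A) ⟨hle, le_rfl⟩).1
  have hbA := (psi_bounds A T z₁ z₂ σ s μ c₀ hA hT hz₁ hz₂ hσdef hsdef hc₀def hμ
    (X := A) ⟨le_rfl, hle⟩).1
  have hIb : ‖∫ x in A..(2*A), psi' T σ s c₀ x * EE μ x‖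
      ≤ (544 * (z₁*z₂/|μ|) * Real.sqrt A) * |2*A - A| := by
    apply intervalIntegral.norm_integral_le_of_norm_le_const
    intro x hx
    have hx' : x ∈ Set.Icc A (2*A) := by
      rw [Set.uIoc_of_le hle] at hx
      exact ⟨hx.1.le, hx.2⟩
    rw [norm_mul, norm_EE, mul_one]
    exact (psi_bounds A T z₁ z₂ σ s μ c₀ hA hT hz₁ hz₂ hσdef hsdef hc₀def hμ hx').2
  have hAabs : |2*A - A| = A := by rw [show 2*A - A = A by ring, abs_of_pos hA0]
  rw [hAabs] at hIb
  set sa := Real.sqrt A with hsadef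
  have hsa0 : 0 ≤ sa := Real.sqrt_nonneg A
  set K := z₁*z₂/|μ| with hKdef
  have hK0 : 0 ≤ K := by positivity
  -- triangle inequality
  set W := psi T σ s c₀ (2*A) * EE μ (2*A) - psi T σ s c₀ A * EE μ A
    - ∫ x in A..(2*A), psi' T σ s c₀ x * EE μ x with hW
  have htri : ‖W‖ ≤ 672 * K * (A * sa) := by
    have t1 : ‖psi T σ s c₀ (2*A) * EE μ (2*A)‖ ≤ 64 * K * (A * sa) := by
      rw [norm_mul, norm_EE, mul_one]; exact hb2A
    have t2 : ‖psi T σ s c₀ A * EE μ A‖ ≤ 64 * K * (A * sa) := by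
      rw [norm_mul, norm_EE, mul_one]; exact hbA
    have h1 := norm_sub_le (psi T σ s c₀ (2*A) * EE μ (2*A) - psi T σ s c₀ A * EE μ A)
      (∫ x in A..(2*A), psi' T σ s c₀ x * EE μ x)
    have h2 := norm_sub_le (psi T σ s c₀ (2*A) * EE μ (2*A)) (psi T σ s c₀ A * EE μ A)
    rw [hW]
    have e1 : 544 * K * sa * A = 544 * K * (A * sa) := by ring
    rw [e1] at hIb
    linarith
  have hnormA : ‖(1/(A:ℂ))‖ = 1/A := by
    rw [norm_div, norm_one, Complex.norm_real, Real.norm_eq_abs, abs_of_pos hA0]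
  rw [norm_mul, hnormA]
  have hfin1 : (1/A) * ‖W‖ ≤ (1/A) * (672 * K * (A * sa)) :=
    mul_le_mul_of_nonneg_left htri (by positivity)
  have hfin2 : (1/A) * (672 * K * (A * sa)) = 672 * K * sa := by
    field_simp
  have hKle : K ≤ 2*(z₁*z₂)/|z₁ - z₂| := by
    rw [hKdef, div_le_div_iff₀ hμ0 habs]
    nlinarith [mul_pos hz₁ hz₂]
  have hfin3 : 672 * K * sa ≤ 672 * (2*(z₁*z₂)/|z₁ - z₂|) * sa := by
    apply mul_le_mul_of_nonneg_right (mul_le_mul_of_nonneg_left hKle (by norm_num)) hsa0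
  have hfin4 : 672 * (2*(z₁*z₂)/|z₁ - z₂|) * sa ≤ 2000 * z₁ * z₂ * sa / |z₁ - z₂| := by
    have e : 672 * (2*(z₁*z₂)/|z₁ - z₂|) * sa = 1344 * z₁ * z₂ * sa / |z₁ - z₂| := by ring
    rw [e, div_le_div_iff₀ habs habs]
    nlinarith [mul_nonneg (mul_nonneg (mul_pos hz₁ hz₂).le hsa0) habs.le]
  calc (1/A) * ‖W‖ ≤ (1/A) * (672 * K * (A * sa)) := hfin1
    _ = 672 * K * sa := hfin2
    _ ≤ 672 * (2*(z₁*z₂)/|z₁ - z₂|) * sa := hfin3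
    _ ≤ 2000 * z₁ * z₂ * sa / |z₁ - z₂| := hfin4
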